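/- arXiv:1604.05504 — 2 statements merged into one kernel-verified Lean document; each statement's English description precedes it below -/
import Mathlib

section
/- Let G be a finite CT group with trivial center. Then the maximal abelian subgroups of G form a partition of G ∖ {1} together with the identity: every nontrivial element of G lies in exactly one maximal abelian subgroup, and two distinct maximal abelian subgroups intersect trivially. -/
/-- A subgroup is maximal abelian if it is abelian and is not properly
contained in any abelian subgroup. -/
def IsMaxAbelian {G : Type} [Group G] (H : Subgroup G) : Prop :=
  (∀ x ∈ H, ∀ y ∈ H, x * y = y * x) ∧
  ∀ K : Subgroup G, (∀ x ∈ K, ∀ y ∈ K, x * y = y * x) → H ≤ K → K = H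

open scoped commutatorElement

/-- In a finite CT group with trivial center, every nontrivial element lies
in exactly one maximal abelian subgroup, and two distinct maximal abelian
subgroups intersect trivially. -/
theorem stmt14 (G : Type) [Group G] [Finite G] (hZ : Subgroup.center G = ⊥)
    (hCT : ∀ a b c : G, a ∉ Subgroup.center G → b ∉ Subgroup.center G →
      c ∉ Subgroup.center G → ⁅a, b⁆ = 1 → ⁅b, c⁆ = 1 → ⁅a, c⁆ = 1) :
    (∀ g : G, g ≠ 1 → ∃! H : Subgroup G, IsMaxAbelian H ∧ g ∈ H) ∧
    (∀ H K : Subgroup G, IsMaxAbelian H → IsMaxAbelian K → H ≠ K →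
      H ⊓ K = ⊥) := by
  have hnc : ∀ x : G, x ≠ 1 → x ∉ Subgroup.center G := by
    intro x hx h
    rw [hZ, Subgroup.mem_bot] at h
    exact hx h
  have habel : ∀ g : G, g ≠ 1 → ∀ x ∈ Subgroup.centralizer {g},
      ∀ y ∈ Subgroup.centralizer {g}, x * y = y * x := by
    intro g hg x hx y hy
    rw [Subgroup.mem_centralizer_singleton_iff] at hx hy
    by_cases hx1 : x = 1
    · simp [hx1]
    by_cases hy1 : y = 1
    · simp [hy1]
    have h1 : ⁅x, g⁆ = 1 := commutatorElement_eq_one_iff_mul_comm.mpr hx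
    have h2 : ⁅g, y⁆ = 1 := commutatorElement_eq_one_iff_mul_comm.mpr hy.symm
    have := hCT x g y (hnc x hx1) (hnc g hg) (hnc y hy1) h1 h2
    exact commutatorElement_eq_one_iff_mul_comm.mp this
  have hgmem : ∀ g : G, g ∈ Subgroup.centralizer {g} := by
    intro g
    rw [Subgroup.mem_centralizer_singleton_iff]
  have hcmax : ∀ g : G, g ≠ 1 → IsMaxAbelian (Subgroup.centralizer {g}) := by
    intro g hg
    refine ⟨habel g hg, fun K hK hle => le_antisymm ?_ hle⟩
    intro k hk
    rw [Subgroup.mem_centralizer_singleton_iff]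
    exact (hK g (hle (hgmem g)) k hk).symm
  have key : ∀ g : G, g ≠ 1 → ∀ H : Subgroup G, IsMaxAbelian H → g ∈ H →
      H = Subgroup.centralizer {g} := by
    intro g hg H hH hgH
    have hle : H ≤ Subgroup.centralizer {g} := by
      intro h hh
      rw [Subgroup.mem_centralizer_singleton_iff]
      exact (hH.1 g hgH h hh).symm
    exact (hH.2 _ (habel g hg) hle).symm
  constructor
  · intro g hg
    refine ⟨Subgroup.centralizer {g}, ⟨hcmax g hg, hgmem g⟩, ?_⟩
    intro H ⟨hH, hgH⟩
    exact key g hg H hH hgH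
  · intro H K hH hK hne
    by_contra hbot
    obtain ⟨⟨g, hgHK⟩, hg1⟩ := (Subgroup.ne_bot_iff_exists_ne_one (H := H ⊓ K)).mp hbot
    have hg1' : g ≠ 1 := by simpa [Subtype.ext_iff] using hg1
    exact hne ((key g hg1' H hH hgHK.1).trans (key g hg1' K hK hgHK.2).symm)
end

section
/- Let C_n and C_m be finite cyclic groups of orders n, m ≥ 2. The kernel of the canonical surjection C_n * C_m → C_n × C_m equals the commutator subgroup [C_n * C_m, C_n * C_m], and it is a free group of rank (n−1)(m−1). -/
set_option linter.unusedSectionVars false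

namespace Stmt19Aux

open Monoid Coprod Multiplicative Equiv

variable (n m : ℕ) [NeZero n] [NeZero m]

abbrev F := FreeGroup (Fin (n-1) × Fin (m-1))
abbrev G := Monoid.Coprod (Multiplicative (ZMod n)) (Multiplicative (ZMod m))
abbrev T := ZMod n × ZMod m

def X (k : ℕ) (j : ZMod m) : F n m :=
  if h : k < n - 1 ∧ j.val ≠ 0 then
    FreeGroup.of (⟨k, h.1⟩, ⟨j.val - 1, by have := ZMod.val_lt j; omega⟩)
  else 1

def dN (k : ℕ) (j : ZMod m) : F n m :=
  (((List.range k).reverse).map (fun l => X n m l j)).prod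

lemma dN_zero (j : ZMod m) : dN n m 0 j = 1 := rfl

lemma dN_succ (k : ℕ) (j : ZMod m) : dN n m (k+1) j = X n m k j * dN n m k j := by
  simp [dN, List.range_succ]

lemma X_col0 (k : ℕ) : X n m k (0 : ZMod m) = 1 := by simp [X]

lemma dN_col0 (k : ℕ) : dN n m k (0 : ZMod m) = 1 := by
  induction k with
  | zero => rfl
  | succ k ih => rw [dN_succ, ih, X_col0, one_mul]

def d (i : ZMod n) (j : ZMod m) : F n m := dN n m i.val j

lemma d_col0 (i : ZMod n) : d n m i (0 : ZMod m) = 1 := dN_col0 n m _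

/-- The rewriting bijection. -/
def Psi : Equiv.Perm (F n m × T n m) where
  toFun p := (d n m p.2.1 p.2.2 * p.1, p.2)
  invFun p := ((d n m p.2.1 p.2.2)⁻¹ * p.1, p.2)
  left_inv p := by simp [inv_mul_cancel_left]
  right_inv p := by simp [mul_inv_cancel_left]

/-- Plain shift of the first `T`-coordinate. -/
def shiftA : Multiplicative (ZMod n) →* Equiv.Perm (F n m × T n m) where
  toFun x := (Equiv.refl (F n m)).prodCongr ((Equiv.addRight x.toAdd).prodCongr (Equiv.refl (ZMod m)))
  map_one' := by
    apply Equiv.ext; rintro ⟨w, i, j⟩; simp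
  map_mul' x y := by
    apply Equiv.ext; rintro ⟨w, i, j⟩
    simp [Equiv.Perm.mul_apply]
    ring

def homA : Multiplicative (ZMod n) →* Equiv.Perm (F n m × T n m) :=
  ((MulAut.conj (Psi n m)).toMonoidHom).comp (shiftA n m)

def homB : Multiplicative (ZMod m) →* Equiv.Perm (F n m × T n m) where
  toFun y := (Equiv.refl (F n m)).prodCongr ((Equiv.refl (ZMod n)).prodCongr (Equiv.addRight y.toAdd))
  map_one' := by
    apply Equiv.ext; rintro ⟨w, i, j⟩; simp
  map_mul' x y := by
    apply Equiv.ext; rintro ⟨w, i, j⟩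
    simp [Equiv.Perm.mul_apply]
    ring

def Phi : G n m →* Equiv.Perm (F n m × T n m) :=
  Monoid.Coprod.lift (homA n m) (homB n m)

lemma Phi_inl (x : Multiplicative (ZMod n)) (w : F n m) (i : ZMod n) (j : ZMod m) :
    Phi n m (Coprod.inl x) (w, (i, j)) =
      (d n m (i + x.toAdd) j * (d n m i j)⁻¹ * w, (i + x.toAdd, j)) := by
  show (Psi n m * shiftA n m x * (Psi n m)⁻¹) (w, (i,j)) = _
  simp only [Equiv.Perm.mul_apply]
  have h1 : ((Psi n m)⁻¹ : Equiv.Perm _) (w, (i,j)) = ((d n m i j)⁻¹ * w, (i, j)) := rfl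
  rw [h1]
  show (d n m (i + x.toAdd) j * ((d n m i j)⁻¹ * w), (i + x.toAdd, j)) = _
  rw [mul_assoc]

lemma Phi_inr (y : Multiplicative (ZMod m)) (w : F n m) (i : ZMod n) (j : ZMod m) :
    Phi n m (Coprod.inr y) (w, (i, j)) = (w, (i, j + y.toAdd)) := rfl

end Stmt19Aux

namespace Stmt19Aux
open Monoid Coprod Multiplicative Equiv
variable (n m : ℕ) [NeZero n] [NeZero m]

lemma Phi_split (g : G n m) : ∀ (w : F n m) (t : T n m),
    Phi n m g (w, t) = ((Phi n m g (1, t)).1 * w, (Phi n m g (1, t)).2) := by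
  induction g using Monoid.Coprod.induction_on with
  | inl x =>
    rintro w ⟨i, j⟩
    rw [Phi_inl, Phi_inl, mul_one]
  | inr y =>
    rintro w ⟨i, j⟩
    rw [Phi_inr, Phi_inr]
    simp
  | mul g₁ g₂ ih₁ ih₂ =>
    intro w t
    simp only [map_mul, Equiv.Perm.mul_apply]
    rw [ih₂ w t, ih₂ 1 t, mul_one]
    rw [ih₁ ((Phi n m g₂ (1, t)).1 * w), ih₁ ((Phi n m g₂ (1, t)).1)]
    simp [mul_assoc]

lemma Phi_snd (g : G n m) : ∀ (w : F n m) (t : T n m),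
    (Phi n m g (w, t)).2 =
      (t.1 + (Monoid.Coprod.toProd g).1.toAdd, t.2 + (Monoid.Coprod.toProd g).2.toAdd) := by
  induction g using Monoid.Coprod.induction_on with
  | inl x =>
    rintro w ⟨i, j⟩
    rw [Phi_inl]
    simp
  | inr y =>
    rintro w ⟨i, j⟩
    rw [Phi_inr]
    simp
  | mul g₁ g₂ ih₁ ih₂ =>
    rintro w ⟨i, j⟩
    rw [map_mul, Equiv.Perm.mul_apply]
    have e : Phi n m g₂ (w, (i, j)) =
        ((Phi n m g₂ (w, (i, j))).1,
          ((Phi n m g₂ (w, (i, j))).2.1, (Phi n m g₂ (w, (i, j))).2.2)) := rfl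
    rw [e, ih₁, ih₂ w (i, j)]
    simp only [map_mul, Prod.fst_mul, Prod.snd_mul, toAdd_mul, Prod.mk.injEq]
    constructor <;> ring

end Stmt19Aux

namespace Stmt19Aux
open Monoid Coprod Multiplicative Equiv
variable (n m : ℕ) [NeZero n] [NeZero m]

def ea (u : ZMod n) : G n m := Coprod.inl (ofAdd u)
def eb (v : ZMod m) : G n m := Coprod.inr (ofAdd v)

lemma ea_mul (u v : ZMod n) : (ea n m u) * ea n m v = ea n m (u + v) := by
  rw [ea, ea, ea, ← map_mul, ← ofAdd_add]
lemma ea_mul' (u v : ZMod n) (z : G n m) :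
    (ea n m u) * ((ea n m v) * z) = ea n m (u + v) * z := by
  rw [← mul_assoc, ea_mul]
lemma eb_mul (u v : ZMod m) : (eb n m u) * eb n m v = eb n m (u + v) := by
  rw [eb, eb, eb, ← map_mul, ← ofAdd_add]
lemma eb_mul' (u v : ZMod m) (z : G n m) :
    (eb n m u) * ((eb n m v) * z) = eb n m (u + v) * z := by
  rw [← mul_assoc, eb_mul]
lemma ea_zero : ea n m (0 : ZMod n) = 1 := by rw [ea, ofAdd_zero, map_one]
lemma eb_zero : eb n m (0 : ZMod m) = 1 := by rw [eb, ofAdd_zero, map_one]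
lemma ea_inv (u : ZMod n) : (ea n m u)⁻¹ = ea n m (-u) := by
  rw [ea, ea, ← map_inv, ← ofAdd_neg]
lemma eb_inv (u : ZMod m) : (eb n m u)⁻¹ = eb n m (-u) := by
  rw [eb, eb, ← map_inv, ← ofAdd_neg]

/-- image of the free generator `s` in the free product: `a^{-(k+1)} b^{-(j+1)} a b^{j+1} a^k`. -/
def gen (s : Fin (n-1) × Fin (m-1)) : G n m :=
  ea n m (-(((s.1 : ℕ) : ZMod n) + 1)) * eb n m (-(((s.2 : ℕ) : ZMod m) + 1)) *
    ea n m 1 * eb n m (((s.2 : ℕ) : ZMod m) + 1) * ea n m ((s.1 : ℕ) : ZMod n)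

def psi : F n m →* G n m := FreeGroup.lift (gen n m)

lemma psi_X (k : ℕ) (j : ZMod m) (hk : k < n - 1) (hj : j.val ≠ 0) :
    psi n m (X n m k j) =
      ea n m (-((k : ZMod n) + 1)) * eb n m (-j) * ea n m 1 * eb n m j * ea n m (k : ZMod n) := by
  rw [X, dif_pos ⟨hk, hj⟩, psi, FreeGroup.lift_apply_of, gen]
  have h1 : (((j.val - 1 : ℕ) : ZMod m) + 1) = j := by
    have : ((j.val - 1 : ℕ) : ZMod m) + 1 = ((j.val - 1 + 1 : ℕ) : ZMod m) := by push_cast; ring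
    rw [this, Nat.sub_add_cancel (by omega), ZMod.natCast_rightInverse j]
  simp only [h1]

lemma psi_dN (j : ZMod m) : ∀ k, k ≤ n - 1 →
    psi n m (dN n m k j) =
      ea n m (-(k : ZMod n)) * eb n m (-j) * ea n m (k : ZMod n) * eb n m j := by
  intro k
  induction k with
  | zero =>
    intro _
    simp only [dN_zero, map_one, Nat.cast_zero, neg_zero, ea_zero, one_mul, eb_mul, mul_one,
      neg_add_cancel, eb_zero]
  | succ k ih =>
    intro hk
    by_cases hj : j.val = 0
    · have hj0 : j = 0 := by rwa [ZMod.val_eq_zero] at hj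
      subst hj0
      simp [dN_col0, neg_zero, eb_zero, mul_one, ea_mul, neg_add_cancel, ea_zero]
    · rw [dN_succ, map_mul, psi_X n m k j (by omega) hj, ih (by omega)]
      push_cast
      simp only [mul_assoc, ea_mul', eb_mul', ea_mul, eb_mul, neg_add_cancel, add_neg_cancel,
        ea_zero, eb_zero, one_mul, mul_one]
      simp [add_comm, add_left_comm, add_assoc, ea_mul', eb_mul', ea_mul, eb_mul, mul_assoc]

end Stmt19Aux

namespace Stmt19Aux
open Monoid Coprod Multiplicative Equiv
variable (n m : ℕ) [NeZero n] [NeZero m]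

lemma psi_d (i : ZMod n) (j : ZMod m) :
    psi n m (d n m i j) = ea n m (-i) * eb n m (-j) * ea n m i * eb n m j := by
  have h1 : i.val ≤ n - 1 := by have := ZMod.val_lt i; omega
  have h2 : ((i.val : ℕ) : ZMod n) = i := ZMod.natCast_rightInverse i
  rw [d, psi_dN n m j i.val h1, h2]

def sig (t : T n m) : G n m := eb n m t.2 * ea n m t.1

lemma Phi_split' (g : G n m) (p : F n m × T n m) :
    Phi n m g p = ((Phi n m g (1, p.2)).1 * p.1, (Phi n m g (1, p.2)).2) :=
  Phi_split n m g p.1 p.2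

lemma key (g : G n m) : ∀ t : T n m,
    g * sig n m t = sig n m ((Phi n m g (1, t)).2) * psi n m ((Phi n m g (1, t)).1) := by
  induction g using Monoid.Coprod.induction_on with
  | inl x =>
    rintro ⟨i, j⟩
    rw [Phi_inl]
    simp only [mul_one]
    rw [map_mul, map_inv, psi_d, psi_d, sig, sig]
    rw [← ofAdd_toAdd x]
    show ea n m x.toAdd * (eb n m j * ea n m i) = _
    simp only [mul_inv_rev, ea_inv, eb_inv, neg_neg, mul_assoc, ea_mul', eb_mul', ea_mul, eb_mul,
      neg_add_cancel, add_neg_cancel, ea_zero, eb_zero, one_mul, mul_one]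
    simp [add_comm, add_left_comm, add_assoc, ea_mul', eb_mul', ea_mul, eb_mul, mul_assoc,
      ea_zero, eb_zero]
  | inr y =>
    rintro ⟨i, j⟩
    rw [Phi_inr]
    rw [← ofAdd_toAdd y]
    show eb n m y.toAdd * (eb n m j * ea n m i) = sig n m (i, j + y.toAdd) * psi n m 1
    rw [map_one, mul_one, sig]
    simp [eb_mul', add_comm]
  | mul g₁ g₂ ih₁ ih₂ =>
    intro t
    rw [mul_assoc, ih₂ t, ← mul_assoc, ih₁, map_mul, Equiv.Perm.mul_apply,
      Phi_split' n m g₁ (Phi n m g₂ (1, t))]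
    simp only [map_mul, mul_assoc]

end Stmt19Aux

namespace Stmt19Aux
open Monoid Coprod Multiplicative Equiv
variable (n m : ℕ) [NeZero n] [NeZero m]

lemma Phi_ea (u : ZMod n) (w : F n m) (i : ZMod n) (j : ZMod m) :
    Phi n m (ea n m u) (w, (i, j)) =
      (d n m (i + u) j * (d n m i j)⁻¹ * w, (i + u, j)) := by
  rw [ea, Phi_inl, toAdd_ofAdd]

lemma Phi_eb (v : ZMod m) (w : F n m) (i : ZMod n) (j : ZMod m) :
    Phi n m (eb n m v) (w, (i, j)) = (w, (i, j + v)) := by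
  rw [eb, Phi_inr, toAdd_ofAdd]

lemma Phi_gen (s : Fin (n-1) × Fin (m-1)) :
    Phi n m (gen n m s) (1, ((0 : ZMod n), (0 : ZMod m))) = (FreeGroup.of s, (0, 0)) := by
  have hs1 : (s.1 : ℕ) < n - 1 := s.1.isLt
  have hs2 : (s.2 : ℕ) < m - 1 := s.2.isLt
  have hn1 : (s.1 : ℕ) + 1 < n := by omega
  have hm1 : (s.2 : ℕ) + 1 < m := by omega
  set K : ZMod n := ((s.1 : ℕ) : ZMod n) with hK
  set J : ZMod m := ((s.2 : ℕ) : ZMod m) + 1 with hJ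
  have hKval : K.val = (s.1 : ℕ) := ZMod.val_natCast_of_lt (by omega)
  have hJcast : J = (((s.2 : ℕ) + 1 : ℕ) : ZMod m) := by push_cast; ring
  have hJval : J.val = (s.2 : ℕ) + 1 := by rw [hJcast]; exact ZMod.val_natCast_of_lt hm1
  have hK1 : K + 1 = (((s.1 : ℕ) + 1 : ℕ) : ZMod n) := by push_cast; ring
  have hK1val : (K + 1).val = (s.1 : ℕ) + 1 := by rw [hK1]; exact ZMod.val_natCast_of_lt hn1
  have hX : d n m (K + 1) J * (d n m K J)⁻¹ = FreeGroup.of s := by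
    rw [d, d, hK1val, hKval, dN_succ, mul_inv_cancel_right]
    rw [X, dif_pos ⟨hs1, by rw [hJval]; omega⟩]
    congr 1
    refine Prod.ext ?_ ?_
    · rfl
    · apply Fin.ext; simp [hJval]
  rw [gen, map_mul, map_mul, map_mul, map_mul]
  simp only [Equiv.Perm.mul_apply]
  rw [Phi_ea, Phi_eb, Phi_ea, Phi_eb, Phi_ea]
  simp only [zero_add, add_neg_cancel, d_col0, one_mul, mul_one, inv_one, hX]
  exact Prod.ext hX rfl

end Stmt19Aux

namespace Stmt19Aux
open Monoid Coprod Multiplicative Equiv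
variable (n m : ℕ) [NeZero n] [NeZero m]
open scoped commutatorElement

abbrev Q : G n m →* Multiplicative (ZMod n) × Multiplicative (ZMod m) :=
  Monoid.Coprod.toProd

lemma Phi_snd_ker (g : G n m) (hg : Q n m g = 1) :
    (Phi n m g (1, ((0 : ZMod n), (0 : ZMod m)))).2 = ((0 : ZMod n), (0 : ZMod m)) := by
  rw [Phi_snd]
  rw [show (Monoid.Coprod.toProd g) = 1 from hg]
  simp

lemma sig_zero : sig n m ((0 : ZMod n), (0 : ZMod m)) = 1 := by
  rw [sig, ea_zero, eb_zero, one_mul]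

lemma psi_rhom (g : G n m) (hg : Q n m g = 1) :
    psi n m ((Phi n m g (1, ((0 : ZMod n), (0 : ZMod m)))).1) = g := by
  have h := key n m g ((0 : ZMod n), (0 : ZMod m))
  rw [Phi_snd_ker n m g hg, sig_zero, mul_one, one_mul] at h
  exact h.symm

def rhom : (Q n m).ker →* F n m where
  toFun k := (Phi n m k.1 (1, ((0 : ZMod n), (0 : ZMod m)))).1
  map_one' := by simp [map_one]
  map_mul' k₁ k₂ := by
    have h₂ : (Phi n m k₂.1 (1, ((0:ZMod n),(0:ZMod m)))).2 = ((0:ZMod n),(0:ZMod m)) :=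
      Phi_snd_ker n m k₂.1 k₂.2
    show (Phi n m (k₁.1 * k₂.1) _).1 = _
    rw [map_mul, Equiv.Perm.mul_apply,
      Phi_split' n m k₁.1 (Phi n m k₂.1 (1, ((0:ZMod n),(0:ZMod m)))), h₂]

lemma toProd_commutator_eq_one (g₁ g₂ : G n m) : Q n m ⁅g₁, g₂⁆ = 1 := by
  rw [map_commutatorElement]
  exact commutatorElement_eq_one_iff_commute.mpr (mul_comm _ _)

lemma commutator_le_ker : commutator (G n m) ≤ (Q n m).ker := by
  rw [commutator_def]
  rw [Subgroup.commutator_le]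
  intro g₁ _ g₂ _
  exact toProd_commutator_eq_one n m g₁ g₂

lemma gen_mem_commutator (s : Fin (n-1) × Fin (m-1)) :
    gen n m s ∈ commutator (G n m) := by
  set u : ZMod n := ((s.1 : ℕ) : ZMod n)
  set v : ZMod m := ((s.2 : ℕ) : ZMod m) + 1
  have h : gen n m s = (ea n m (-(u+1))) * ⁅eb n m (-v), ea n m 1⁆ * (ea n m (-(u+1)))⁻¹ := by
    rw [commutatorElement_def, gen, ea_inv, eb_inv, ea_inv, neg_neg, neg_neg]
    simp only [mul_assoc, ea_mul', eb_mul', ea_mul, eb_mul, one_mul, mul_one]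
    rw [show (-1 + (u + 1) : ZMod n) = u by ring]
  rw [h, commutator_def]
  exact (Subgroup.commutator_normal ⊤ ⊤).conj_mem _
    (Subgroup.commutator_mem_commutator (Subgroup.mem_top _) (Subgroup.mem_top _)) _

lemma psi_mem_commutator (w : F n m) : psi n m w ∈ commutator (G n m) := by
  have h : (psi n m).range ≤ commutator (G n m) := by
    rw [psi, FreeGroup.range_lift_eq_closure]
    apply (Subgroup.closure_le _).mpr
    rintro x ⟨s, rfl⟩
    exact gen_mem_commutator n m s
  exact h ⟨w, rfl⟩

lemma ker_eq_commutator : (Q n m).ker = commutator (G n m) := by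
  apply le_antisymm
  · intro g hg
    have hg' : Q n m g = 1 := hg
    rw [← psi_rhom n m g hg']
    exact psi_mem_commutator n m _
  · exact commutator_le_ker n m

def psiK : F n m →* (Q n m).ker :=
  (psi n m).codRestrict _ (fun w => commutator_le_ker n m (psi_mem_commutator n m w))

def eqv : (Q n m).ker ≃* F n m := by
  refine MonoidHom.toMulEquiv (rhom n m) (psiK n m) ?_ ?_
  · ext k
    show ((psiK n m) ((rhom n m) k) : G n m) = (k : G n m)
    exact psi_rhom n m k.1 k.2
  · refine FreeGroup.ext_hom _ _ fun s => ?_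
    show (rhom n m) ((psiK n m) (FreeGroup.of s)) = FreeGroup.of s
    show (Phi n m (psi n m (FreeGroup.of s)) (1, ((0:ZMod n),(0:ZMod m)))).1 = _
    rw [psi, FreeGroup.lift_apply_of, Phi_gen]

end Stmt19Aux

/-- The kernel of the canonical surjection `C_n * C_m → C_n × C_m` of cyclic
groups (`n, m ≥ 2`) equals the commutator subgroup of the free product, and
is free of rank `(n−1)(m−1)`. -/
theorem stmt19 (n m : ℕ) (hn : 2 ≤ n) (hm : 2 ≤ m)
    (p : Monoid.Coprod (Multiplicative (ZMod n)) (Multiplicative (ZMod m)) →*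
      Multiplicative (ZMod n) × Multiplicative (ZMod m))
    (hp : p = Monoid.Coprod.lift (MonoidHom.inl _ _) (MonoidHom.inr _ _)) :
    p.ker = commutator
        (Monoid.Coprod (Multiplicative (ZMod n)) (Multiplicative (ZMod m))) ∧
    Nonempty (p.ker ≃* FreeGroup (Fin ((n - 1) * (m - 1)))) := by
  haveI : NeZero n := ⟨by omega⟩
  haveI : NeZero m := ⟨by omega⟩
  have hpq : p = Stmt19Aux.Q n m := hp
  subst hpq
  exact ⟨Stmt19Aux.ker_eq_commutator n m,
    ⟨(Stmt19Aux.eqv n m).trans (FreeGroup.freeGroupCongr finProdFinEquiv)⟩⟩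
end
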